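/- If σ : Ω → [0,T] is a stopping time for the filtration (𝒢_r) generated by W⁰ (augmented), then for each r ∈ [0,T] the event {σ ≤ r}, viewed after the decoupling operation (which replaces the Brownian increments on (s,t] by independent ones while preserving joint distributions), yields that the decoupled random variable σ^{(s,t]} admits a representative that is a stopping time for the filtration generated by W^{(s,t]}. -/

import Mathlib

open MeasureTheory

/-- Decoupling preserves stopping times: let `D` be an (abstract) decoupling operator on
random variables which is distribution preserving, commutes (a.e.) with Borel functions of
finitely many random variables, and maps `ℱ_r`-measurable variables to variables having
`ℱ_r^{(s,t]}`-measurable representatives, where the decoupled filtration `ℱ^{(s,t]}` is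
augmented by the null sets. Then for every stopping time `σ : Ω → [0,T]` for `ℱ`, the
decoupled random variable `D σ` admits a representative which is a stopping time for
`ℱ^{(s,t]}`. -/
theorem decoupled_stopping_time
    {Ω : Type*} {m0 : MeasurableSpace Ω} {μ : Measure Ω} [IsProbabilityMeasure μ]
    (T : ℝ) (hT : 0 < T)
    (F F' : Filtration ℝ m0)
    (D : (Ω → ℝ) → (Ω → ℝ))
    (hDmeas : ∀ f : Ω → ℝ, Measurable f → Measurable (D f))
    (hDdist : ∀ f : Ω → ℝ, Measurable f → μ.map (D f) = μ.map f)
    (hDborel : ∀ (n : ℕ) (f : Fin n → Ω → ℝ) (g : (Fin n → ℝ) → ℝ),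
      (∀ i, Measurable (f i)) → Measurable g →
      D (fun ω => g (fun i => f i ω)) =ᵐ[μ] fun ω => g (fun i => D (f i) ω))
    (hDadapted : ∀ (r : ℝ) (f : Ω → ℝ), StronglyMeasurable[F r] f →
      ∃ g : Ω → ℝ, StronglyMeasurable[F' r] g ∧ D f =ᵐ[μ] g)
    (hF'complete : ∀ (r : ℝ) (N : Set Ω), MeasurableSet N → μ N = 0 →
      MeasurableSet[F' r] N)
    (σ : Ω → ℝ) (hσ : IsStoppingTime F (fun ω => (σ ω : WithTop ℝ))) (hσmem : ∀ ω, σ ω ∈ Set.Icc 0 T) :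
    ∃ σ' : Ω → ℝ, σ' =ᵐ[μ] D σ ∧ IsStoppingTime F' (fun ω => (σ' ω : WithTop ℝ)) := by
  have hσ' : ∀ r, MeasurableSet[F r] {ω | σ ω ≤ r} := fun r => by simpa using hσ r
  have hσmeas : Measurable σ := by
    apply measurable_of_Iic
    intro r
    exact F.le r _ (hσ' r)
  have hDσmeas : Measurable (D σ) := hDmeas σ hσmeas
  refine ⟨D σ, Filter.EventuallyEq.rfl, ?_⟩
  intro r
  set g : (Fin 1 → ℝ) → ℝ := fun v => Set.indicator (Set.Iic r) (fun _ => (1:ℝ)) (v 0)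
    with hg
  have hgmeas : Measurable g := by
    apply Measurable.indicator measurable_const
    exact measurableSet_Iic.preimage (measurable_pi_apply 0)
  have hcomm := hDborel 1 (fun _ => σ) g (fun _ => hσmeas) hgmeas
  have hsm : StronglyMeasurable[F r] (fun ω => g (fun _ => σ ω)) := by
    have heq : (fun ω => g (fun _ => σ ω))
        = Set.indicator {ω | σ ω ≤ r} (fun _ => (1:ℝ)) := by
      funext ω
      by_cases h : σ ω ≤ r
      · simp [hg, Set.indicator_of_mem, Set.mem_Iic.mpr h, h]
      · simp [hg, Set.indicator_of_notMem, h]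
    rw [heq]
    exact (stronglyMeasurable_const (β := ℝ)).indicator (hσ' r)
  obtain ⟨h, hhsm, hh⟩ := hDadapted r _ hsm
  have hae : (fun ω => g (fun _ => D σ ω)) =ᵐ[μ] h := hcomm.symm.trans hh
  set N : Set Ω := {ω | g (fun _ => D σ ω) ≠ h ω} with hN
  have hNmeas : MeasurableSet N := by
    have h1 : Measurable (fun ω => g (fun _ => D σ ω)) :=
      hgmeas.comp (measurable_pi_lambda _ (fun _ => hDσmeas))
    have h2 : Measurable h := hhsm.measurable.mono (F'.le r) le_rfl
    exact (measurableSet_eq_fun h1 h2).compl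
  have hNnull : μ N = 0 := hae
  have hNF : MeasurableSet[F' r] N := hF'complete r N hNmeas hNnull
  have hS : {ω | D σ ω ≤ r} = ({ω | h ω = 1} \ N) ∪ ({ω | D σ ω ≤ r} ∩ N) := by
    ext ω
    simp only [Set.mem_setOf_eq, Set.mem_union, Set.mem_diff, Set.mem_inter_iff, hN,
      not_not]
    constructor
    · intro hle
      by_cases hω : g (fun _ => D σ ω) = h ω
      · left
        refine ⟨?_, hω⟩
        rw [← hω, hg]
        simp [Set.indicator_of_mem, Set.mem_Iic.mpr hle]
      · right; exact ⟨hle, hω⟩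
    · rintro (⟨hh1, heq⟩ | ⟨hle, _⟩)
      · by_contra hc
        have hz : g (fun _ => D σ ω) = 0 := by
          simp [hg, Set.indicator_of_notMem, Set.mem_Iic, hc]
        rw [hz] at heq
        rw [← heq] at hh1
        norm_num at hh1
      · exact hle
  simp only [WithTop.coe_le_coe]
  show MeasurableSet[F' r] {ω | D σ ω ≤ r}
  rw [hS]
  refine MeasurableSet.union ?_ ?_
  · exact (hhsm.measurable (measurableSet_singleton 1)).diff hNF
  · refine hF'complete r _ ?_ ?_
    · exact (hDσmeas measurableSet_Iic).inter hNmeas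
    · exact measure_mono_null Set.inter_subset_right hNnull
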